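/- Let X and Y be independent, identically distributed nonnegative random variables with P(X > v) = 1/(1 + v) for every v ≥ 0. Then the expected second-highest value among the three values 1, X, Y, namely E[max(min(1, X), min(1, Y), min(X, Y))], equals 2·ln 2 (= ln 4). (This is the revenue of the Vickrey auction when only the slanted equal-revenue bidder is duplicated in Hartline–Roughgarden's example; the ratio 2/ln 4 ≈ 1.44 is the largest known gap for the Vickrey auction with a single duplicate.) -/

import Mathlib

open MeasureTheory ProbabilityTheory Set

private lemma hr_intA : ∫ t in (0:ℝ)..1, (2/(1+t) - (1/(1+t))^2) = 2 * Real.log 2 - 1/2 := by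
  have h : ∀ t ∈ uIcc (0:ℝ) 1, HasDerivAt (fun t => 2 * Real.log (1+t) + (1+t)⁻¹)
      (2/(1+t) - (1/(1+t))^2) t := by
    intro t ht
    rw [uIcc_of_le (by norm_num)] at ht
    have hpos : (0:ℝ) < 1 + t := by linarith [ht.1]
    have h1 : HasDerivAt (fun t : ℝ => 1 + t) 1 t := (hasDerivAt_id t).const_add 1
    have hlog : HasDerivAt (fun t : ℝ => Real.log (1+t)) ((1+t)⁻¹ * 1) t :=
      (Real.hasDerivAt_log hpos.ne').comp t h1
    have hinv : HasDerivAt (fun t : ℝ => (1+t)⁻¹) (-1 / (1+t)^2) t := h1.inv hpos.ne'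
    have := (hlog.const_mul 2).add hinv
    exact this.congr_deriv (by rw [one_div, inv_pow]; ring)
  have hcont : ContinuousOn (fun t : ℝ => 2/(1+t) - (1/(1+t))^2) (uIcc (0:ℝ) 1) := by
    rw [uIcc_of_le (by norm_num)]
    apply ContinuousOn.sub
    · exact ContinuousOn.div continuousOn_const (by fun_prop) fun t ht =>
        ne_of_gt (by linarith [ht.1])
    · exact (ContinuousOn.div continuousOn_const (by fun_prop) fun t ht =>
        ne_of_gt (by linarith [ht.1])).pow 2
  rw [intervalIntegral.integral_eq_sub_of_hasDerivAt h (hcont.intervalIntegrable)]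
  simp [Real.log_one]
  ring

private lemma hr_intB : ∫ t in Ioi (1:ℝ), (1/(1+t))^2 = 1/2 := by
  have hderiv : ∀ t ∈ Ici (1:ℝ), HasDerivAt (fun t : ℝ => -(1+t)⁻¹) ((1/(1+t))^2) t := by
    intro t ht
    have hpos : (0:ℝ) < 1 + t := by have := mem_Ici.mp ht; linarith
    have h1 : HasDerivAt (fun t : ℝ => 1 + t) 1 t := (hasDerivAt_id t).const_add 1
    have := (h1.inv hpos.ne').neg
    exact this.congr_deriv (by rw [one_div, inv_pow]; ring)
  have htend : Filter.Tendsto (fun t : ℝ => -(1+t)⁻¹) Filter.atTop (nhds 0) := by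
    have : Filter.Tendsto (fun t : ℝ => (1+t)) Filter.atTop Filter.atTop :=
      Filter.tendsto_atTop_add_const_left _ 1 Filter.tendsto_id
    simpa using (Filter.Tendsto.inv_tendsto_atTop this).neg
  have := integral_Ioi_of_hasDerivAt_of_nonneg' hderiv (fun t ht => by positivity) htend
  rw [this]
  norm_num

/-- **Hartline–Roughgarden example with a single duplicate.**
If `X, Y` are i.i.d. with `P(X > v) = 1/(1+v)` for `v ≥ 0`, then the expected
second-highest value among the three bids `1, X, Y`, namely
`E[max(min(1,X), min(1,Y), min(X,Y))]`, equals `2·ln 2`. -/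
theorem stmt_16 {Ω : Type*} [MeasurableSpace Ω] (μ : Measure Ω) [IsProbabilityMeasure μ]
    (X Y : Ω → ℝ) (hX : Measurable X) (hY : Measurable Y)
    (hXnn : ∀ ω, 0 ≤ X ω) (hYnn : ∀ ω, 0 ≤ Y ω)
    (hindep : IndepFun X Y μ)
    (hXtail : ∀ v : ℝ, 0 ≤ v → (μ {ω | v < X ω}).toReal = 1 / (1 + v))
    (hYtail : ∀ v : ℝ, 0 ≤ v → (μ {ω | v < Y ω}).toReal = 1 / (1 + v)) :
    ∫ ω, max (min 1 (X ω)) (max (min 1 (Y ω)) (min (X ω) (Y ω))) ∂μ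
      = 2 * Real.log 2 := by
  set Z : Ω → ℝ := fun ω => max (min 1 (X ω)) (max (min 1 (Y ω)) (min (X ω) (Y ω))) with hZdef
  have hZm : Measurable Z :=
    (measurable_const.min hX).max ((measurable_const.min hY).max (hX.min hY))
  have hZnn : ∀ ω, 0 ≤ Z ω :=
    fun ω => le_trans (le_min zero_le_one (hXnn ω)) (le_max_left _ _)
  have hμX : ∀ t : ℝ, 0 ≤ t → μ {ω | t < X ω} = ENNReal.ofReal (1/(1+t)) := fun t ht => by
    rw [← hXtail t ht, ENNReal.ofReal_toReal (measure_ne_top μ _)]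
  have hμY : ∀ t : ℝ, 0 ≤ t → μ {ω | t < Y ω} = ENNReal.ofReal (1/(1+t)) := fun t ht => by
    rw [← hYtail t ht, ENNReal.ofReal_toReal (measure_ne_top μ _)]
  have hAB : ∀ t : ℝ, μ ({ω | t < X ω} ∩ {ω | t < Y ω}) = μ {ω | t < X ω} * μ {ω | t < Y ω} :=
    fun t => hindep.measure_inter_preimage_eq_mul (Ioi t) (Ioi t)
      measurableSet_Ioi measurableSet_Ioi
  -- the tail of Z on (0, 1)
  have tail1 : ∀ t ∈ Ioo (0:ℝ) 1, μ {ω | t < Z ω} = ENNReal.ofReal (2/(1+t) - (1/(1+t))^2) := by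
    intro t ht
    have ht1 : t < 1 := ht.2
    have hpos : (0:ℝ) < 1 + t := by linarith [ht.1]
    have hp0 : (0:ℝ) ≤ 1/(1+t) := by positivity
    have hset : {ω | t < Z ω} = {ω | t < X ω} ∪ {ω | t < Y ω} := by
      ext ω
      simp only [hZdef, mem_setOf_eq, mem_union, lt_max_iff, lt_min_iff]
      constructor
      · rintro (⟨-, h⟩ | ⟨-, h⟩ | ⟨h, -⟩) <;> tauto
      · rintro (h | h) <;> tauto
    have key : μ ({ω | t < X ω} ∪ {ω | t < Y ω}) + μ ({ω | t < X ω} ∩ {ω | t < Y ω})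
        = μ {ω | t < X ω} + μ {ω | t < Y ω} :=
      measure_union_add_inter _ (hY measurableSet_Ioi)
    rw [hAB t, hμX t ht.1.le, hμY t ht.1.le, ← ENNReal.ofReal_mul hp0,
      ← ENNReal.ofReal_add hp0 hp0] at key
    rw [hset, ENNReal.eq_sub_of_add_eq ENNReal.ofReal_ne_top key,
      ← ENNReal.ofReal_sub _ (by positivity)]
    congr 1
    field_simp
    ring
  -- the tail of Z on [1, ∞)
  have tail2 : ∀ t ∈ Ici (1:ℝ), μ {ω | t < Z ω} = ENNReal.ofReal ((1/(1+t))^2) := by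
    intro t ht
    have ht1 : (1:ℝ) ≤ t := ht
    have hpos : (0:ℝ) < 1 + t := by linarith
    have hp0 : (0:ℝ) ≤ 1/(1+t) := by positivity
    have hnlt : ¬ t < 1 := not_lt.2 ht1
    have hset : {ω | t < Z ω} = {ω | t < X ω} ∩ {ω | t < Y ω} := by
      ext ω
      simp only [hZdef, mem_setOf_eq, mem_inter_iff, lt_max_iff, lt_min_iff]
      constructor
      · rintro (⟨h1, -⟩ | ⟨h1, -⟩ | h) <;> tauto
      · rintro ⟨h1, h2⟩; tauto
    rw [hset, hAB t, hμX t (by linarith), hμY t (by linarith), ← ENNReal.ofReal_mul hp0, sq]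
  -- layer cake
  rw [integral_eq_lintegral_of_nonneg_ae (Filter.Eventually.of_forall hZnn)
    hZm.aestronglyMeasurable]
  rw [lintegral_eq_lintegral_meas_lt μ (Filter.Eventually.of_forall hZnn) hZm.aemeasurable]
  have hsplit : Ioi (0:ℝ) = Ioo 0 1 ∪ Ici 1 := (Ioo_union_Ici_eq_Ioi (by norm_num)).symm
  rw [hsplit, lintegral_union measurableSet_Ici (by
    intro s hs1 hs2 x hx
    exact absurd ((hs2 hx) : (1:ℝ) ≤ x) (not_le.2 (hs1 hx).2))]
  -- piece 1
  have piece1 : ∫⁻ t in Ioo (0:ℝ) 1, μ {a | t < Z a} = ENNReal.ofReal (2 * Real.log 2 - 1/2) := by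
    rw [setLIntegral_congr_fun measurableSet_Ioo
      (fun t ht => by rw [tail1 t ht])]
    have hInt : IntegrableOn (fun t : ℝ => 2/(1+t) - (1/(1+t))^2) (Ioo 0 1) := by
      apply (ContinuousOn.integrableOn_Icc ?_).mono_set Ioo_subset_Icc_self
      apply ContinuousOn.sub
      · exact ContinuousOn.div continuousOn_const (by fun_prop) fun t ht =>
          ne_of_gt (by linarith [ht.1])
      · exact (ContinuousOn.div continuousOn_const (by fun_prop) fun t ht =>
          ne_of_gt (by linarith [ht.1])).pow 2
    rw [← ofReal_integral_eq_lintegral_ofReal hInt ((ae_restrict_iff' measurableSet_Ioo).2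
      (Filter.Eventually.of_forall fun t ht => by
        have hpos : (0:ℝ) < 1 + t := by linarith [ht.1]
        have h2 : (1:ℝ)/(1+t) ≤ 2 := by
          rw [div_le_iff₀ hpos]; linarith [ht.1]
        have hp0 : (0:ℝ) ≤ 1/(1+t) := by positivity
        have hkey := mul_nonneg hp0 (by linarith : (0:ℝ) ≤ 2 - 1/(1+t))
        simp only [Pi.zero_apply]
        rw [show (2:ℝ)/(1+t) = 2*(1/(1+t)) by ring, sq]
        nlinarith))]
    congr 1
    rw [← integral_Ioc_eq_integral_Ioo, ← intervalIntegral.integral_of_le (by norm_num : (0:ℝ) ≤ 1)]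
    exact hr_intA
  -- piece 2
  have piece2 : ∫⁻ t in Ici (1:ℝ), μ {a | t < Z a} = ENNReal.ofReal (1/2) := by
    rw [setLIntegral_congr_fun measurableSet_Ici
      (fun t ht => by rw [tail2 t ht])]
    rw [setLIntegral_congr (Ioi_ae_eq_Ici (μ := volume) (a := (1:ℝ))).symm]
    have hInt : IntegrableOn (fun t : ℝ => (1/(1+t))^2) (Ioi 1) := by
      have hderiv : ∀ t ∈ Ici (1:ℝ), HasDerivAt (fun t : ℝ => -(1+t)⁻¹) ((1/(1+t))^2) t := by
        intro t ht
        have hpos : (0:ℝ) < 1 + t := by have := mem_Ici.mp ht; linarith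
        have h1 : HasDerivAt (fun t : ℝ => 1 + t) 1 t := (hasDerivAt_id t).const_add 1
        have := (h1.inv hpos.ne').neg
        exact this.congr_deriv (by rw [one_div, inv_pow]; ring)
      have htend : Filter.Tendsto (fun t : ℝ => -(1+t)⁻¹) Filter.atTop (nhds 0) := by
        have : Filter.Tendsto (fun t : ℝ => (1+t)) Filter.atTop Filter.atTop :=
          Filter.tendsto_atTop_add_const_left _ 1 Filter.tendsto_id
        simpa using (Filter.Tendsto.inv_tendsto_atTop this).neg
      exact integrableOn_Ioi_deriv_of_nonneg' hderiv (fun t ht => by positivity) htend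
    rw [← ofReal_integral_eq_lintegral_ofReal hInt
      (Filter.Eventually.of_forall fun t => by positivity), hr_intB]
  rw [piece1, piece2, ← ENNReal.ofReal_add ?_ (by norm_num)]
  · rw [ENNReal.toReal_ofReal ?_] <;> nlinarith [Real.log_two_gt_d9]
  · nlinarith [Real.log_two_gt_d9]
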